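/- Let M ≥ 2 and n₁,…,n_M ≥ 2 be integers, Q = ∏_{i=1}^M n_i − ∑_{i=1}^M n_i + M − 1, and let c_I = (M − 1 − ∑_{i∈I} n_i)/Q for proper subsets I ⊊ {1,…,M} with c_{{1,…,M}} = 1. Then ∑_{I⊆{1,…,M}} c_I ∏_{j∈Iᶜ} (n_j − 1) = 0. Equivalently, every row of the S×S matrix with entries c_{I(z,z′)} sums to zero (the all-ones vector lies in its kernel), i.e. λ_J = 0 for J = {1,…,M}. -/

import Mathlib

open Finset

lemma aux_sum {ι : Type*} [DecidableEq ι] (x : ι → ℝ) (s : Finset ι) :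
    ∀ b : ℝ, ∑ I ∈ s.powerset, (b - ∑ i ∈ I, x i) * ∏ j ∈ s \ I, (x j - 1)
      = (b - s.card) * ∏ j ∈ s, x j := by
  induction s using Finset.induction_on with
  | empty => simp
  | insert a s ha ih =>
    intro b
    rw [Finset.sum_powerset_insert ha]
    have h1 : ∑ I ∈ s.powerset, (b - ∑ i ∈ I, x i) * ∏ j ∈ insert a s \ I, (x j - 1)
        = (x a - 1) * ((b - s.card) * ∏ j ∈ s, x j) := by
      rw [← ih b, Finset.mul_sum]
      refine Finset.sum_congr rfl fun I hI => ?_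
      have haI : a ∉ I := fun h => ha (Finset.mem_powerset.mp hI h)
      rw [Finset.insert_sdiff_of_notMem _ haI,
        Finset.prod_insert (fun h => ha (Finset.mem_sdiff.mp h).1)]
      ring
    have h2 : ∑ I ∈ s.powerset, (b - ∑ i ∈ insert a I, x i) * ∏ j ∈ insert a s \ insert a I, (x j - 1)
        = (b - x a - s.card) * ∏ j ∈ s, x j := by
      rw [← ih (b - x a)]
      refine Finset.sum_congr rfl fun I hI => ?_
      have haI : a ∉ I := fun h => ha (Finset.mem_powerset.mp hI h)
      have : insert a s \ insert a I = s \ I := by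
        ext j; simp only [Finset.mem_sdiff, Finset.mem_insert]
        constructor
        · rintro ⟨hj1 | hj1, hj2⟩ <;> [exact absurd (Or.inl hj1) hj2;
            exact ⟨hj1, fun h => hj2 (Or.inr h)⟩]
        · rintro ⟨hj1, hj2⟩
          exact ⟨Or.inr hj1, by rintro (rfl | h) <;> [exact ha hj1; exact hj2 h]⟩
      rw [this, Finset.sum_insert haI]
      ring
    rw [h1, h2, Finset.prod_insert ha, Finset.card_insert_of_notMem ha]
    push_cast
    ring

lemma aux_pos {ι : Type*} [DecidableEq ι] (b : ι → ℕ) (s : Finset ι) (hb : ∀ i ∈ s, 2 ≤ b i) :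
    ∑ i ∈ s, b i ≤ ∏ i ∈ s, b i := by
  induction s using Finset.induction_on with
  | empty => simp
  | insert a s ha ih =>
    have ih' := ih (fun i hi => hb i (Finset.mem_insert_of_mem hi))
    rw [Finset.sum_insert ha, Finset.prod_insert ha]
    rcases s.eq_empty_or_nonempty with rfl | ⟨i, hi⟩
    · simp
    · have h2 : 2 ≤ ∑ i ∈ s, b i :=
        le_trans (hb i (Finset.mem_insert_of_mem hi))
          (Finset.single_le_sum (fun j _ => Nat.zero_le _) hi)
      have hba : 2 ≤ b a := hb a (Finset.mem_insert_self a s)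
      nlinarith [ih', h2, hba]

lemma aux_fiber {M : ℕ} (n : Fin M → ℕ)
    (z : ∀ j, Fin (n j)) (I : Finset (Fin M)) :
    (Finset.univ.filter fun z' : (∀ j, Fin (n j)) =>
        (Finset.univ.filter fun j => z j = z' j) = I).card
      = ∏ j ∈ Iᶜ, (n j - 1) := by
  classical
  have hset : (Finset.univ.filter fun z' : (∀ j, Fin (n j)) =>
        (Finset.univ.filter fun j => z j = z' j) = I)
      = Fintype.piFinset (fun j => if j ∈ I then ({z j} : Finset (Fin (n j))) else {z j}ᶜ) := by
    ext z'
    simp only [Finset.mem_filter, Finset.mem_univ, true_and, Fintype.mem_piFinset,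
      Finset.ext_iff, Finset.mem_filter, Finset.mem_univ, true_and]
    constructor
    · intro h j
      have hj := h j
      by_cases hjI : j ∈ I <;>
        simp_all [Finset.mem_compl, Finset.mem_singleton, eq_comm]
    · intro h j
      have hj := h j
      by_cases hjI : j ∈ I <;>
        simp_all [Finset.mem_compl, Finset.mem_singleton, eq_comm]
  rw [hset, Fintype.card_piFinset]
  have : ∀ j : Fin M,
      ((if j ∈ I then ({z j} : Finset (Fin (n j))) else {z j}ᶜ)).card
        = if j ∈ Iᶜ then n j - 1 else 1 := by
    intro j
    by_cases hjI : j ∈ I <;>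
      simp [hjI, Finset.card_compl, Fintype.card_fin]
  simp_rw [this]
  rw [Finset.prod_ite_mem, Finset.univ_inter]

/-- **First step of the proof of Lemma 1 of the paper (case `#Jᶜ = 0`).**
For the equal-prevalence correlation family,
`∑_{I⊆{1,…,M}} c_I ∏_{j∈Iᶜ} (n_j − 1) = 0`; equivalently, every row of the
matrix with entries `c_{I(z,z′)}` sums to zero (the all-ones vector lies in
its kernel), i.e. `λ_J = 0` for `J = {1,…,M}`. -/
theorem equal_prevalence_row_sum_zero
    (M : ℕ) (hM : 2 ≤ M) (n : Fin M → ℕ) (hn : ∀ j, 2 ≤ n j)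
    (Q : ℝ) (hQ : Q = (∏ i, (n i : ℝ)) - (∑ i, (n i : ℝ)) + M - 1)
    (c : Finset (Fin M) → ℝ)
    (hc : ∀ I : Finset (Fin M), I ≠ Finset.univ →
      c I = ((M : ℝ) - 1 - ∑ i ∈ I, (n i : ℝ)) / Q)
    (hcuniv : c Finset.univ = 1) :
    (∑ I : Finset (Fin M), c I * ∏ j ∈ Iᶜ, ((n j : ℝ) - 1)) = 0 ∧
    ∀ z : ∀ j, Fin (n j),
      (∑ z' : ∀ j, Fin (n j),
        c (Finset.univ.filter fun j => z j = z' j)) = 0 := by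
  classical
  -- Q is positive
  have hprodsum : (∑ i, (n i : ℝ)) ≤ ∏ i, (n i : ℝ) := by
    exact_mod_cast Nat.cast_le.mpr (aux_pos n Finset.univ (fun i _ => hn i))
  have hQpos : 0 < Q := by
    rw [hQ]
    have : (2 : ℝ) ≤ M := by exact_mod_cast hM
    linarith
  have hQne : Q ≠ 0 := ne_of_gt hQpos
  -- the key combinatorial identity
  have hkey : ∑ I ∈ (Finset.univ : Finset (Fin M)).powerset,
      (((M : ℝ) - 1) - ∑ i ∈ I, (n i : ℝ)) * ∏ j ∈ Finset.univ \ I, ((n j : ℝ) - 1)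
      = (((M : ℝ) - 1) - M) * ∏ j, (n j : ℝ) := by
    rw [aux_sum (fun i => (n i : ℝ)) Finset.univ ((M : ℝ) - 1)]
    simp
  -- rewrite sums over powerset as sums over all finsets, and univ \ I as Iᶜ
  have hkey' : ∑ I : Finset (Fin M),
      (((M : ℝ) - 1) - ∑ i ∈ I, (n i : ℝ)) * ∏ j ∈ Iᶜ, ((n j : ℝ) - 1)
      = -(∏ j, (n j : ℝ)) := by
    rw [← Finset.powerset_univ]
    calc ∑ I ∈ (Finset.univ : Finset (Fin M)).powerset,
        (((M : ℝ) - 1) - ∑ i ∈ I, (n i : ℝ)) * ∏ j ∈ Iᶜ, ((n j : ℝ) - 1)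
        = ∑ I ∈ (Finset.univ : Finset (Fin M)).powerset,
        (((M : ℝ) - 1) - ∑ i ∈ I, (n i : ℝ)) * ∏ j ∈ Finset.univ \ I, ((n j : ℝ) - 1) := by
          refine Finset.sum_congr rfl fun I _ => ?_
          rw [Finset.compl_eq_univ_sdiff]
      _ = -(∏ j, (n j : ℝ)) := by rw [hkey]; ring
  -- first part
  have part1 : (∑ I : Finset (Fin M), c I * ∏ j ∈ Iᶜ, ((n j : ℝ) - 1)) = 0 := by
    have hsplit : ∑ I : Finset (Fin M), c I * ∏ j ∈ Iᶜ, ((n j : ℝ) - 1)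
        = (∑ I : Finset (Fin M),
            ((((M : ℝ) - 1) - ∑ i ∈ I, (n i : ℝ)) / Q) * ∏ j ∈ Iᶜ, ((n j : ℝ) - 1))
          - ((((M : ℝ) - 1) - ∑ i, (n i : ℝ)) / Q) + 1 := by
      rw [← Finset.sum_erase_add _ _ (Finset.mem_univ (Finset.univ : Finset (Fin M))),
        ← Finset.sum_erase_add _
          (fun I => ((((M : ℝ) - 1) - ∑ i ∈ I, (n i : ℝ)) / Q) * ∏ j ∈ Iᶜ, ((n j : ℝ) - 1))
          (Finset.mem_univ (Finset.univ : Finset (Fin M)))]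
      have hsame : ∑ I ∈ (Finset.univ : Finset (Finset (Fin M))).erase Finset.univ,
            c I * ∏ j ∈ Iᶜ, ((n j : ℝ) - 1)
          = ∑ I ∈ (Finset.univ : Finset (Finset (Fin M))).erase Finset.univ,
            ((((M : ℝ) - 1) - ∑ i ∈ I, (n i : ℝ)) / Q) * ∏ j ∈ Iᶜ, ((n j : ℝ) - 1) := by
        refine Finset.sum_congr rfl fun I hI => ?_
        rw [hc I (Finset.ne_of_mem_erase hI)]
      rw [hsame, hcuniv]
      try simp
      try ring
    rw [hsplit]
    have : ∑ I : Finset (Fin M),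
        ((((M : ℝ) - 1) - ∑ i ∈ I, (n i : ℝ)) / Q) * ∏ j ∈ Iᶜ, ((n j : ℝ) - 1)
        = -(∏ j, (n j : ℝ)) / Q := by
      rw [← hkey', Finset.sum_div]
      refine Finset.sum_congr rfl fun I _ => ?_
      ring
    rw [this]
    have hstep : -(∏ j, (n j : ℝ)) / Q - (((M : ℝ) - 1) - ∑ i, (n i : ℝ)) / Q + 1
        = (-(∏ j, (n j : ℝ)) - (((M : ℝ) - 1) - ∑ i, (n i : ℝ)) + Q) / Q := by
      field_simp
    have hnum : -(∏ j, (n j : ℝ)) - (((M : ℝ) - 1) - ∑ i, (n i : ℝ)) + Q = 0 := by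
      rw [hQ]; ring
    rw [hstep, hnum, zero_div]
  refine ⟨part1, fun z => ?_⟩
  -- second part: group the sum over z' by agreement set
  have hfib := Finset.sum_fiberwise' (Finset.univ : Finset (∀ j, Fin (n j)))
    (fun z' => Finset.univ.filter fun j => z j = z' j) c
  rw [← hfib]
  rw [← part1]
  refine Finset.sum_congr rfl fun I _ => ?_
  rw [Finset.sum_const, aux_fiber n z I, nsmul_eq_mul, Nat.cast_prod]
  rw [mul_comm]
  congr 1
  refine Finset.prod_congr rfl fun j _ => ?_
  have : 1 ≤ n j := le_trans one_le_two (hn j)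
  push_cast [Nat.cast_sub this]
  ring
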